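/- Let H be an inner product space over ℝ or ℂ, let x, y, e ∈ H with ‖e‖ = 1, and let r₁, r₂ ∈ (0,1) with ‖x − e‖ ≤ r₁ and ‖y − e‖ ≤ r₂. Then |⟨x,y⟩ − ⟨x,e⟩⟨e,y⟩| ≤ r₁r₂‖x‖‖y‖. -/

import Mathlib

open scoped InnerProductSpace ComplexConjugate

open RCLike in
lemma aux_14 {𝕜 E : Type*} [RCLike 𝕜] [NormedAddCommGroup E] [InnerProductSpace 𝕜 E]
    (e : E) (he : ‖e‖ = 1) (x : E) (r : ℝ) (hr : r ∈ Set.Ioo (0 : ℝ) 1)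
    (hx : ‖x - e‖ ≤ r) : ‖x - (⟪e, x⟫_𝕜) • e‖ ≤ r * ‖x‖ := by
  obtain ⟨hr0, hr1⟩ := hr
  set c : 𝕜 := ⟪e, x⟫_𝕜 with hc
  have h1 : ‖x - e‖ ^ 2 = ‖x‖ ^ 2 - 2 * re (⟪x, e⟫_𝕜) + ‖e‖ ^ 2 :=
    norm_sub_sq (𝕜 := 𝕜) x e
  have h2 : ‖x - c • e‖ ^ 2 = ‖x‖ ^ 2 - ‖c‖ ^ 2 := by
    have := norm_sub_sq (𝕜 := 𝕜) x (c • e)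
    rw [inner_smul_right, ← inner_conj_symm x e] at this
    simp only [norm_smul, he, mul_one] at this
    rw [← hc] at this
    simp only [RCLike.mul_conj, ← RCLike.ofReal_pow, RCLike.ofReal_re] at this
    -- this : ‖x - c • e‖^2 = ‖x‖^2 - 2 * ‖c‖^2 + ‖c‖^2
    rw [this]; ring
  have hre : re (⟪x, e⟫_𝕜) ≤ ‖c‖ := by
    calc re (⟪x, e⟫_𝕜) ≤ ‖⟪x, e⟫_𝕜‖ := RCLike.re_le_norm _
    _ = ‖c‖ := by rw [hc, ← inner_conj_symm x e, norm_conj]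
  have hle : ‖x - e‖ ^ 2 ≤ r ^ 2 := by
    have := norm_nonneg (x - e)
    nlinarith
  have hnc : (0:ℝ) ≤ ‖c‖ := norm_nonneg _
  have hnx : (0:ℝ) ≤ ‖x‖ := norm_nonneg _
  have hkey : ‖x - c • e‖ ^ 2 ≤ (r * ‖x‖) ^ 2 := by
    rw [h2]
    have hb : (‖x‖ ^ 2 + 1 - r ^ 2) / 2 ≤ ‖c‖ := by nlinarith
    have hbpos : (0:ℝ) ≤ (‖x‖ ^ 2 + 1 - r ^ 2) / 2 := by nlinarith
    have hc2 : ((‖x‖ ^ 2 + 1 - r ^ 2) / 2) ^ 2 ≤ ‖c‖ ^ 2 := by nlinarith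
    nlinarith [sq_nonneg (‖x‖ ^ 2 - (1 - r ^ 2))]
  have h3 : (0:ℝ) ≤ r * ‖x‖ := by positivity
  nlinarith [norm_nonneg (x - c • e)]

theorem stmt_14 {𝕜 E : Type*} [RCLike 𝕜] [NormedAddCommGroup E] [InnerProductSpace 𝕜 E]
    (x y e : E) (he : ‖e‖ = 1) (r₁ r₂ : ℝ) (hr₁ : r₁ ∈ Set.Ioo (0 : ℝ) 1)
    (hr₂ : r₂ ∈ Set.Ioo (0 : ℝ) 1) (hx : ‖x - e‖ ≤ r₁) (hy : ‖y - e‖ ≤ r₂) :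
    ‖⟪x, y⟫_𝕜 - ⟪x, e⟫_𝕜 * ⟪e, y⟫_𝕜‖ ≤ r₁ * r₂ * ‖x‖ * ‖y‖ := by
  have hee : ⟪e, e⟫_𝕜 = 1 := by
    rw [inner_self_eq_norm_sq_to_K, he]; norm_num
  have key : ⟪x, y⟫_𝕜 - ⟪x, e⟫_𝕜 * ⟪e, y⟫_𝕜
      = ⟪x - (⟪e, x⟫_𝕜) • e, y - (⟪e, y⟫_𝕜) • e⟫_𝕜 := by
    simp only [inner_sub_left, inner_sub_right, inner_smul_left, inner_smul_right,
      inner_conj_symm, hee, mul_one]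
    ring
  rw [key]
  calc ‖⟪x - (⟪e, x⟫_𝕜) • e, y - (⟪e, y⟫_𝕜) • e⟫_𝕜‖
      ≤ ‖x - (⟪e, x⟫_𝕜) • e‖ * ‖y - (⟪e, y⟫_𝕜) • e‖ := norm_inner_le_norm _ _
    _ ≤ (r₁ * ‖x‖) * (r₂ * ‖y‖) := by
        apply mul_le_mul (aux_14 e he x r₁ hr₁ hx) (aux_14 e he y r₂ hr₂ hy)
          (norm_nonneg _) (mul_nonneg hr₁.1.le (norm_nonneg _))
    _ = r₁ * r₂ * ‖x‖ * ‖y‖ := by ring
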